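/- Let (L, R) be an AWFS on C. The following are equivalent: (1) the forgetful functor from L-coalgebras to C^2 is fully faithful; (2) the comonad L is idempotent; (3) for every L-coalgebra f̂ : A → B, the square (f, 1_B) : f → 1_B underlies a coalgebra map from f̂ to the unique coalgebra structure on 1_B; (4) the forgetful functor from R-algebras to C^2 is fully faithful; (5) the monad R is idempotent; (6) liftings of L-coalgebras against R-algebras are unique. -/

import Mathlib

open CategoryTheory

universe v u

/-- A functorial factorisation on `C`. -/
structure FunctorialFactorisation (C : Type u) [Category.{v} C] where
  E : Arrow C ⥤ C
  l : Arrow.leftFunc ⟶ E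
  r : E ⟶ Arrow.rightFunc
  fac : ∀ f : Arrow C, l.app f ≫ r.app f = f.hom

namespace FunctorialFactorisation

variable {C : Type u} [Category.{v} C] (ff : FunctorialFactorisation C)

/-- The counit square `ε_f = (1, ρ f) : λ f → f`. -/
def εhom (f : Arrow C) : Arrow.mk (ff.l.app f) ⟶ f :=
  Arrow.homMk (u := 𝟙 f.left) (v := ff.r.app f) ((Category.id_comp _).trans (ff.fac f).symm)

/-- The unit square `η_f = (λ f, 1) : f → ρ f`. -/
def ηhom (f : Arrow C) : f ⟶ Arrow.mk (ff.r.app f) :=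
  Arrow.homMk (u := ff.l.app f) (v := 𝟙 f.right) ((ff.fac f).trans (Category.comp_id _).symm)

end FunctorialFactorisation

/-- An algebraic weak factorisation system on `C`: a functorial factorisation `(λ, E, ρ)`
together with an extension of `(L, ε)` to a comonad over the domain functor, an extension of
`(R, η)` to a monad over the codomain functor, and a distributive law of the comonad over the
monad (with prescribed domain/codomain components).  Since the comultiplication and
multiplication squares have one identity component, all the data is in the maps
`comul f : E f ⟶ E (λ f)` and `mul f : E (ρ f) ⟶ E f`. -/
structure AWFS (C : Type u) [Category.{v} C] where
  ff : FunctorialFactorisation C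
  comul : ∀ f : Arrow C, ff.E.obj f ⟶ ff.E.obj (Arrow.mk (ff.l.app f))
  mul : ∀ f : Arrow C, ff.E.obj (Arrow.mk (ff.r.app f)) ⟶ ff.E.obj f
  comul_w : ∀ f : Arrow C, ff.l.app f ≫ comul f = ff.l.app (Arrow.mk (ff.l.app f))
  mul_w : ∀ f : Arrow C, mul f ≫ ff.r.app f = ff.r.app (Arrow.mk (ff.r.app f))
  comul_counit : ∀ f : Arrow C,
    comul f ≫ ff.r.app (Arrow.mk (ff.l.app f)) = 𝟙 (ff.E.obj f)
  comul_counit' : ∀ f : Arrow C, comul f ≫ ff.E.map (ff.εhom f) = 𝟙 (ff.E.obj f)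
  mul_unit : ∀ f : Arrow C, ff.l.app (Arrow.mk (ff.r.app f)) ≫ mul f = 𝟙 (ff.E.obj f)
  mul_unit' : ∀ f : Arrow C, ff.E.map (ff.ηhom f) ≫ mul f = 𝟙 (ff.E.obj f)
  comul_coassoc : ∀ f : Arrow C,
    comul f ≫ comul (Arrow.mk (ff.l.app f)) =
      comul f ≫ ff.E.map (Arrow.homMk (u := 𝟙 f.left) (v := comul f)
        ((Category.id_comp _).trans (comul_w f).symm) :
          Arrow.mk (ff.l.app f) ⟶ Arrow.mk (ff.l.app (Arrow.mk (ff.l.app f))))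
  mul_assoc : ∀ f : Arrow C,
    mul (Arrow.mk (ff.r.app f)) ≫ mul f =
      ff.E.map (Arrow.homMk (u := mul f) (v := 𝟙 f.right)
        ((mul_w f).trans (Category.comp_id _).symm) :
          Arrow.mk (ff.r.app (Arrow.mk (ff.r.app f))) ⟶ Arrow.mk (ff.r.app f)) ≫ mul f
  distrib : ∀ f : Arrow C,
    comul (Arrow.mk (ff.r.app f)) ≫
      ff.E.map (Arrow.homMk (u := comul f) (v := mul f)
        ((comul_counit f).trans (mul_unit f).symm) :
          Arrow.mk (ff.l.app (Arrow.mk (ff.r.app f))) ⟶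
            Arrow.mk (ff.r.app (Arrow.mk (ff.l.app f)))) ≫
      mul (Arrow.mk (ff.l.app f)) = mul f ≫ comul f

namespace AWFS

variable {C : Type u} [Category.{v} C] (A : AWFS C)

/-- A coalgebra for the comonad `L` of an AWFS: since `L` is a comonad over the domain
functor, a coalgebra structure on `f : A ⟶ B` is a single map `s : B ⟶ E f`. -/
structure Coalgebra (f : Arrow C) where
  s : f.right ⟶ A.ff.E.obj f
  w : f.hom ≫ s = A.ff.l.app f
  counit : s ≫ A.ff.r.app f = 𝟙 f.right
  coassoc : s ≫ A.comul f =
    s ≫ A.ff.E.map (Arrow.homMk (u := 𝟙 f.left) (v := s)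
      ((Category.id_comp _).trans w.symm) : f ⟶ Arrow.mk (A.ff.l.app f))

/-- An algebra for the monad `R` of an AWFS: since `R` is a monad over the codomain
functor, an algebra structure on `g : C ⟶ D` is a single map `p : E g ⟶ C`. -/
structure Algebra (g : Arrow C) where
  p : A.ff.E.obj g ⟶ g.left
  w : p ≫ g.hom = A.ff.r.app g
  unit : A.ff.l.app g ≫ p = 𝟙 g.left
  assoc : A.mul g ≫ p =
    A.ff.E.map (Arrow.homMk (u := p) (v := 𝟙 g.right)
      (w.trans (Category.comp_id _).symm) : Arrow.mk (A.ff.r.app g) ⟶ g) ≫ p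

/-- The canonical diagonal filler of an `L`-coalgebra against an `R`-algebra. -/
def fill {f g : Arrow C} (cf : A.Coalgebra f) (ag : A.Algebra g) (sq : f ⟶ g) :
    f.right ⟶ g.left :=
  cf.s ≫ A.ff.E.map sq ≫ ag.p

end AWFS


namespace AWFS

variable {C : Type u} [Category.{v} C] (A : AWFS C)

lemma l_nat {f g : Arrow C} (sq : f ⟶ g) :
    sq.left ≫ A.ff.l.app g = A.ff.l.app f ≫ A.ff.E.map sq := by
  exact A.ff.l.naturality sq

lemma r_nat {f g : Arrow C} (sq : f ⟶ g) :
    A.ff.E.map sq ≫ A.ff.r.app g = A.ff.r.app f ≫ sq.right := by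
  exact A.ff.r.naturality sq

/-- The canonical coalgebra structure on an identity arrow. -/
def idCoalg (X : C) : A.Coalgebra (Arrow.mk (𝟙 X)) where
  s := A.ff.l.app (Arrow.mk (𝟙 X))
  w := Category.id_comp _
  counit := A.ff.fac _
  coassoc := by
    erw [A.comul_w]
    exact (Category.id_comp _).symm.trans (A.l_nat
      (Arrow.homMk (u := 𝟙 (Arrow.mk (𝟙 X)).left) (v := A.ff.l.app (Arrow.mk (𝟙 X)))
        rfl :
        Arrow.mk (𝟙 X) ⟶ Arrow.mk (A.ff.l.app (Arrow.mk (𝟙 X)))))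

@[simp] lemma idCoalg_s (X : C) : (A.idCoalg X).s = A.ff.l.app (Arrow.mk (𝟙 X)) := rfl

/-- The canonical algebra structure on an identity arrow. -/
def idAlg (X : C) : A.Algebra (Arrow.mk (𝟙 X)) where
  p := A.ff.r.app (Arrow.mk (𝟙 X))
  w := Category.comp_id _
  unit := A.ff.fac _
  assoc := by
    erw [A.mul_w]
    exact ((A.r_nat
      (Arrow.homMk (u := A.ff.r.app (Arrow.mk (𝟙 X))) (v := 𝟙 (Arrow.mk (𝟙 X)).right)
        rfl :
        Arrow.mk (A.ff.r.app (Arrow.mk (𝟙 X))) ⟶ Arrow.mk (𝟙 X))).trans (Category.comp_id _)).symm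

@[simp] lemma idAlg_p (X : C) : (A.idAlg X).p = A.ff.r.app (Arrow.mk (𝟙 X)) := rfl

/-- The cofree coalgebra on `λ f`. -/
def cofreeCoalg (f : Arrow C) : A.Coalgebra (Arrow.mk (A.ff.l.app f)) where
  s := A.comul f
  w := A.comul_w f
  counit := A.comul_counit f
  coassoc := A.comul_coassoc f

/-- The free algebra on `ρ f`. -/
def freeAlg (f : Arrow C) : A.Algebra (Arrow.mk (A.ff.r.app f)) where
  p := A.mul f
  w := A.mul_w f
  unit := A.mul_unit f
  assoc := A.mul_assoc f

/-- If the comultiplication at `f` is invertible, any coalgebra structure on `f` is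
inverse to `ρ f`. -/
lemma counit_inv_of_isIso {f : Arrow C} [IsIso (A.comul f)] (cf : A.Coalgebra f) :
    A.ff.r.app f ≫ cf.s = 𝟙 (A.ff.E.obj f) := by
  have h1 : inv (A.comul f) = A.ff.E.map (A.ff.εhom f) :=
    IsIso.inv_eq_of_hom_inv_id (A.comul_counit' f)
  let σ : f ⟶ Arrow.mk (A.ff.l.app f) :=
    Arrow.homMk (u := 𝟙 f.left) (v := cf.s) ((Category.id_comp _).trans cf.w.symm)
  have hσε : σ ≫ A.ff.εhom f = 𝟙 f := by
    ext
    · exact Category.id_comp _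
    · exact cf.counit
  have h2 : A.ff.E.map σ ≫ inv (A.comul f) = 𝟙 _ := by
    rw [h1, ← A.ff.E.map_comp, hσε, A.ff.E.map_id]
  have hEσ : A.ff.E.map σ = A.comul f := by
    calc A.ff.E.map σ = A.ff.E.map σ ≫ inv (A.comul f) ≫ A.comul f := by simp
      _ = (A.ff.E.map σ ≫ inv (A.comul f)) ≫ A.comul f := by rw [Category.assoc]
      _ = A.comul f := by rw [h2, Category.id_comp]
  have h4 := A.r_nat σ
  rw [hEσ, A.comul_counit] at h4
  exact h4.symm

/-- If the multiplication at `g` is invertible, any algebra structure on `g` is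
inverse to `λ g`. -/
lemma unit_inv_of_isIso {g : Arrow C} [IsIso (A.mul g)] (ag : A.Algebra g) :
    ag.p ≫ A.ff.l.app g = 𝟙 (A.ff.E.obj g) := by
  have h1 : inv (A.mul g) = A.ff.E.map (A.ff.ηhom g) :=
    IsIso.inv_eq_of_inv_hom_id (A.mul_unit' g)
  let π : Arrow.mk (A.ff.r.app g) ⟶ g :=
    Arrow.homMk (u := ag.p) (v := 𝟙 g.right) (ag.w.trans (Category.comp_id _).symm)
  have hηπ : A.ff.ηhom g ≫ π = 𝟙 g := by
    ext
    · exact ag.unit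
    · exact Category.id_comp _
  have h2 : inv (A.mul g) ≫ A.ff.E.map π = 𝟙 _ := by
    rw [h1, ← A.ff.E.map_comp, hηπ, A.ff.E.map_id]
  have hEπ : A.ff.E.map π = A.mul g := by
    calc A.ff.E.map π = (A.mul g ≫ inv (A.mul g)) ≫ A.ff.E.map π := by simp
      _ = A.mul g ≫ (inv (A.mul g) ≫ A.ff.E.map π) := by rw [Category.assoc]
      _ = A.mul g := by rw [h2, Category.comp_id]
  have h4 := A.l_nat π
  rw [hEπ, A.mul_unit] at h4
  exact h4

end AWFS

/-- For an AWFS `(L, R)` on `C`, the following are equivalent: (1) the forgetful functor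
from `L`-coalgebras to `C²` is fully faithful (every square between coalgebras is a
coalgebra map); (2) the comonad `L` is idempotent (its comultiplication is invertible);
(3) for every `L`-coalgebra `f̂ : A → B` the square `(f, 1) : f → 1_B` is a coalgebra map
into the coalgebra structure on `1_B`; (4) the forgetful functor from `R`-algebras to `C²`
is fully faithful; (5) the monad `R` is idempotent; (6) liftings of `L`-coalgebras against
`R`-algebras are unique. -/
theorem AWFS.orthogonal_tfae {C : Type u} [Category.{v} C] (A : AWFS C) :
    List.TFAE
      [ ∀ (f f' : Arrow C) (cf : A.Coalgebra f) (cf' : A.Coalgebra f') (sq : f ⟶ f'),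
          cf.s ≫ A.ff.E.map sq = sq.right ≫ cf'.s,
        ∀ f : Arrow C, IsIso (A.comul f),
        ∀ (f : Arrow C) (cf : A.Coalgebra f) (c1 : A.Coalgebra (Arrow.mk (𝟙 f.right))),
          cf.s ≫ A.ff.E.map (Arrow.homMk (u := f.hom) (v := 𝟙 f.right) (by simp) :
              f ⟶ Arrow.mk (𝟙 f.right)) = 𝟙 f.right ≫ c1.s,
        ∀ (g g' : Arrow C) (ag : A.Algebra g) (ag' : A.Algebra g') (sq : g ⟶ g'),
          ag.p ≫ sq.left = A.ff.E.map sq ≫ ag'.p,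
        ∀ f : Arrow C, IsIso (A.mul f),
        ∀ (f g : Arrow C) (_ : A.Coalgebra f) (_ : A.Algebra g) (sq : f ⟶ g)
            (j j' : f.right ⟶ g.left),
          f.hom ≫ j = sq.left → j ≫ g.hom = sq.right →
          f.hom ≫ j' = sq.left → j' ≫ g.hom = sq.right → j = j' ] := by
  tfae_have 1 → 3 := by
    intro h1 f cf c1
    simpa using h1 f _ cf c1 (Arrow.homMk (u := f.hom) (v := 𝟙 f.right) (by simp))
  tfae_have 3 → 6 := by
    intro h3 f g cf ag sq j j' hj1 hj2 hj1' hj2'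
    have key : ∀ k : f.right ⟶ g.left, f.hom ≫ k = sq.left → k ≫ g.hom = sq.right →
        k = cf.s ≫ A.ff.E.map sq ≫ ag.p := by
      intro k hk1 hk2
      let α₁ : f ⟶ Arrow.mk (𝟙 f.right) :=
        Arrow.homMk (u := f.hom) (v := 𝟙 f.right) (by simp)
      let α₂ : Arrow.mk (𝟙 f.right) ⟶ Arrow.mk (𝟙 g.left) :=
        Arrow.homMk (u := k) (v := k) (by simp)
      let β : Arrow.mk (𝟙 g.left) ⟶ g :=
        Arrow.homMk (u := 𝟙 g.left) (v := g.hom) (by simp)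
      have hfac : sq = α₁ ≫ α₂ ≫ β := by
        ext
        · simp [α₁, α₂, β, ← hk1]
        · simp [α₁, α₂, β, ← hk2]
      have e1 : cf.s ≫ A.ff.E.map α₁ = A.ff.l.app (Arrow.mk (𝟙 f.right)) := by
        exact (h3 f cf (A.idCoalg f.right)).trans (Category.id_comp _)
      have e2 : A.ff.l.app (Arrow.mk (𝟙 f.right)) ≫ A.ff.E.map α₂ =
          k ≫ A.ff.l.app (Arrow.mk (𝟙 g.left)) := by
        exact (A.l_nat α₂).symm
      have e3 : A.ff.l.app (Arrow.mk (𝟙 g.left)) ≫ A.ff.E.map β = A.ff.l.app g := by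
        exact (A.l_nat β).symm.trans (Category.id_comp _)
      rw [hfac]
      calc k = k ≫ A.ff.l.app g ≫ ag.p := by erw [ag.unit, Category.comp_id]
        _ = k ≫ (A.ff.l.app (Arrow.mk (𝟙 g.left)) ≫ A.ff.E.map β) ≫ ag.p := by erw [e3]
        _ = (k ≫ A.ff.l.app (Arrow.mk (𝟙 g.left))) ≫ A.ff.E.map β ≫ ag.p := by
            exact (whisker_eq k (Category.assoc _ _ _)).trans (Category.assoc _ _ _).symm
        _ = ((A.ff.l.app (Arrow.mk (𝟙 f.right)) ≫ A.ff.E.map α₂) ≫ A.ff.E.map β ≫ ag.p :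
            f.right ⟶ g.left) := by
            erw [e2]
        _ = ((cf.s ≫ A.ff.E.map α₁) ≫ A.ff.E.map α₂) ≫ A.ff.E.map β ≫ ag.p := by erw [e1]
        _ = cf.s ≫ A.ff.E.map (α₁ ≫ α₂ ≫ β) ≫ ag.p := by
            simp [A.ff.E.map_comp]
    rw [key j hj1 hj2, key j' hj1' hj2']
  tfae_have 6 → 2 := by
    intro h6 f
    set x := Arrow.mk (A.ff.l.app f) with hx
    have step := h6 (Arrow.mk (A.ff.l.app x)) (Arrow.mk (A.ff.r.app x))
      (A.cofreeCoalg x) (A.freeAlg x)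
      (Arrow.homMk (u := A.ff.l.app x) (v := A.ff.r.app x) (by simp))
      (𝟙 (A.ff.E.obj x)) (A.ff.r.app x ≫ A.comul f)
      (by simp) (by simp)
      (by
        show A.ff.l.app x ≫ A.ff.r.app x ≫ A.comul f = A.ff.l.app x
        erw [← Category.assoc, A.ff.fac x]
        exact A.comul_w f)
      (by
        show (A.ff.r.app x ≫ A.comul f) ≫ A.ff.r.app x = A.ff.r.app x
        erw [Category.assoc, A.comul_counit f]
        exact Category.comp_id _)
    exact ⟨⟨A.ff.r.app x, A.comul_counit f, step.symm⟩⟩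
  tfae_have 2 → 1 := by
    intro h2 f f' cf cf' sq
    haveI := h2 f'
    have k' := A.counit_inv_of_isIso cf'
    calc cf.s ≫ A.ff.E.map sq
        = cf.s ≫ A.ff.E.map sq ≫ (A.ff.r.app f' ≫ cf'.s) := by
          rw [k', Category.comp_id]
      _ = cf.s ≫ (A.ff.E.map sq ≫ A.ff.r.app f') ≫ cf'.s := by
          exact whisker_eq _ (Category.assoc _ _ _).symm
      _ = cf.s ≫ (A.ff.r.app f ≫ sq.right) ≫ cf'.s := by rw [A.r_nat sq]; rfl
      _ = (cf.s ≫ A.ff.r.app f) ≫ sq.right ≫ cf'.s := by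
          exact (whisker_eq _ (Category.assoc _ _ _)).trans (Category.assoc _ _ _).symm
      _ = sq.right ≫ cf'.s := by erw [cf.counit, Category.id_comp]; rfl
  tfae_have 6 → 5 := by
    intro h6 f
    set x := Arrow.mk (A.ff.r.app f) with hx
    have step := h6 (Arrow.mk (A.ff.l.app x)) (Arrow.mk (A.ff.r.app x))
      (A.cofreeCoalg x) (A.freeAlg x)
      (Arrow.homMk (u := A.ff.l.app x) (v := A.ff.r.app x) (by simp))
      (𝟙 (A.ff.E.obj x)) (A.mul f ≫ A.ff.l.app x)
      (by simp) (by simp)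
      (by
        show A.ff.l.app x ≫ A.mul f ≫ A.ff.l.app x = A.ff.l.app x
        erw [← Category.assoc, A.mul_unit f]
        exact Category.id_comp _)
      (by
        show (A.mul f ≫ A.ff.l.app x) ≫ A.ff.r.app x = A.ff.r.app x
        erw [Category.assoc, A.ff.fac x]
        exact A.mul_w f)
    exact ⟨⟨A.ff.l.app x, step.symm, A.mul_unit f⟩⟩
  tfae_have 5 → 4 := by
    intro h5 g g' ag ag' sq
    haveI := h5 g
    have k := A.unit_inv_of_isIso ag
    symm
    calc A.ff.E.map sq ≫ ag'.p
        = (ag.p ≫ A.ff.l.app g) ≫ A.ff.E.map sq ≫ ag'.p := by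
          rw [k, Category.id_comp]
      _ = ag.p ≫ (A.ff.l.app g ≫ A.ff.E.map sq) ≫ ag'.p := by
          exact (Category.assoc _ _ _).trans (whisker_eq _ (Category.assoc _ _ _).symm)
      _ = ag.p ≫ (sq.left ≫ A.ff.l.app g') ≫ ag'.p := by rw [A.l_nat sq]; rfl
      _ = ag.p ≫ sq.left ≫ (A.ff.l.app g' ≫ ag'.p) := by
          exact whisker_eq _ (Category.assoc _ _ _)
      _ = ag.p ≫ sq.left := by erw [ag'.unit, Category.comp_id]
  tfae_have 4 → 6 := by
    intro h4 f g cf ag sq j j' hj1 hj2 hj1' hj2'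
    have key : ∀ k : f.right ⟶ g.left, f.hom ≫ k = sq.left → k ≫ g.hom = sq.right →
        k = cf.s ≫ A.ff.E.map sq ≫ ag.p := by
      intro k hk1 hk2
      let α₁ : f ⟶ Arrow.mk (𝟙 f.right) :=
        Arrow.homMk (u := f.hom) (v := 𝟙 f.right) (by simp)
      let α₂ : Arrow.mk (𝟙 f.right) ⟶ Arrow.mk (𝟙 g.left) :=
        Arrow.homMk (u := k) (v := k) (by simp)
      let β : Arrow.mk (𝟙 g.left) ⟶ g :=
        Arrow.homMk (u := 𝟙 g.left) (v := g.hom) (by simp)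
      have hfac : sq = α₁ ≫ α₂ ≫ β := by
        ext
        · simp [α₁, α₂, β, ← hk1]
        · simp [α₁, α₂, β, ← hk2]
      have e3 : A.ff.E.map β ≫ ag.p = A.ff.r.app (Arrow.mk (𝟙 g.left)) := by
        exact (h4 (Arrow.mk (𝟙 g.left)) g (A.idAlg g.left) ag β).symm.trans (Category.comp_id _)
      have e2 : A.ff.E.map α₂ ≫ A.ff.r.app (Arrow.mk (𝟙 g.left)) =
          A.ff.r.app (Arrow.mk (𝟙 f.right)) ≫ k := by
        simpa [α₂] using A.r_nat α₂
      have e1 : A.ff.E.map α₁ ≫ A.ff.r.app (Arrow.mk (𝟙 f.right)) = A.ff.r.app f := by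
        exact (A.r_nat α₁).trans (Category.comp_id _)
      rw [hfac]
      calc k = (cf.s ≫ A.ff.r.app f) ≫ k := by erw [cf.counit, Category.id_comp]
        _ = cf.s ≫ (A.ff.E.map α₁ ≫ A.ff.r.app (Arrow.mk (𝟙 f.right))) ≫ k := by
            erw [e1, Category.assoc]; rfl
        _ = cf.s ≫ A.ff.E.map α₁ ≫ (A.ff.r.app (Arrow.mk (𝟙 f.right)) ≫ k) := by
            exact whisker_eq _ (Category.assoc _ _ _)
        _ = (cf.s ≫ A.ff.E.map α₁ ≫ (A.ff.E.map α₂ ≫ A.ff.r.app (Arrow.mk (𝟙 g.left))) :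
            f.right ⟶ g.left) := by
            erw [e2]
        _ = cf.s ≫ A.ff.E.map α₁ ≫ A.ff.E.map α₂ ≫ (A.ff.E.map β ≫ ag.p) := by
            rw [e3]
        _ = cf.s ≫ A.ff.E.map (α₁ ≫ α₂ ≫ β) ≫ ag.p := by
            simp [A.ff.E.map_comp]
    rw [key j hj1 hj2, key j' hj1' hj2']
  tfae_finish
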